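/- Let μ be a σ-finite Borel measure on ℂ. Then there exists an increasing sequence (Fₙ) of compact subsets of ℂ such that each Fₙ has empty interior, the complement ℂ \ Fₙ is connected, and μ(ℂ \ ⋃ₙ Fₙ) = 0. -/

import Mathlib

open MeasureTheory Filter
open Set
open scoped ENNReal Topology


lemma exists_dense_open_small (ν : Measure ℝ) [IsFiniteMeasure ν]
    (ε : ℝ≥0∞) (hε : 0 < ε) :
    ∃ U : Set ℝ, IsOpen U ∧ Dense U ∧ ν U ≤ ε := by
  have key : ∀ q : ℝ, ∀ c : ℝ≥0∞, 0 < c → ∃ δ : ℝ, 0 < δ ∧ ν (Ioo q (q + δ)) ≤ c := by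
    intro q c hc
    have h1 : Tendsto (fun k : ℕ => ν (Ioo q (q + 1 / (k + 1))))
        atTop (𝓝 (ν (⋂ k : ℕ, Ioo q (q + 1 / (k + 1))))) := by
      refine tendsto_measure_iInter_atTop (fun k => measurableSet_Ioo.nullMeasurableSet)
        (fun k l hkl => Ioo_subset_Ioo_right (by
          have : (1 : ℝ) / (l + 1) ≤ 1 / (k + 1) :=
            one_div_le_one_div_of_le (by positivity) (by exact_mod_cast Nat.succ_le_succ hkl)
          linarith)) ⟨0, measure_ne_top ν _⟩
    have h2 : (⋂ k : ℕ, Ioo q (q + 1 / (k + 1))) = (∅ : Set ℝ) := by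
      ext x
      simp only [mem_iInter, mem_Ioo, mem_empty_iff_false, iff_false, not_forall]
      by_contra h
      push_neg at h
      have hx : 0 < x - q := sub_pos.2 (h 0).1
      obtain ⟨k, hk⟩ := exists_nat_one_div_lt hx
      exact absurd ((h k).2) (by linarith)
    rw [h2, measure_empty] at h1
    obtain ⟨k, hk⟩ := (h1.eventually_lt_const hc).exists
    exact ⟨1 / (k + 1), by positivity, hk.le⟩
  let f : ℕ ≃ ℚ := (Denumerable.eqv ℚ).symm
  have hc : ∀ n : ℕ, 0 < ε * 2⁻¹ ^ (n + 1) := by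
    intro n
    exact ENNReal.mul_pos hε.ne' (pow_ne_zero _ (by simp))
  choose δ hδpos hδν using fun n : ℕ => key (f n : ℝ) _ (hc n)
  refine ⟨⋃ n, Ioo ((f n : ℝ)) (f n + δ n), isOpen_iUnion fun n => isOpen_Ioo, ?_, ?_⟩
  · rw [dense_iff_inter_open]
    intro V hV hVne
    obtain ⟨x, hx⟩ := hVne
    obtain ⟨r, hr, hball⟩ := Metric.isOpen_iff.mp hV x hx
    obtain ⟨q, hq1, hq2⟩ := exists_rat_btwn (show x - r < x by linarith)
    set n := f.symm q with hn
    have hfn : (f n : ℝ) = (q : ℝ) := by simp [hn]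
    set y := (q : ℝ) + min (δ n) (x - q) / 2 with hy
    have hmin : 0 < min (δ n) (x - q) := lt_min (hδpos n) (by linarith)
    have hyV : y ∈ V := by
      apply hball
      rw [Metric.mem_ball, Real.dist_eq, abs_lt]
      have h1 : min (δ n) (x - q) ≤ x - q := min_le_right _ _
      constructor <;> [skip; skip] <;> simp only [hy] <;> nlinarith
    refine ⟨y, hyV, mem_iUnion.2 ⟨n, ?_⟩⟩
    rw [hfn]
    constructor
    · simp only [hy]; linarith
    · have h1 : min (δ n) (x - q) ≤ δ n := min_le_left _ _
      have := hδpos n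
      simp only [hy]; linarith
  · refine (measure_iUnion_le _).trans ?_
    refine (ENNReal.tsum_le_tsum fun n => hδν n).trans ?_
    rw [ENNReal.tsum_mul_left, ENNReal.tsum_geometric_add_one, ENNReal.one_sub_inv_two,
      inv_inv, ENNReal.inv_mul_cancel two_ne_zero ENNReal.ofNat_ne_top, mul_one]


lemma compl_reProdIm_connected {K : Set ℝ} {n : ℝ} (hK : K ⊆ Icc (-n) n) :
    IsConnected (K ×ℂ Icc (-n) n)ᶜ := by
  set A : Set ℂ := {z | n < z.im} with hAdef
  set B : Set ℂ := {z | z.im < -n} with hBdef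
  set R : Set ℂ := {z | n < z.re} with hRdef
  set G := (A ∪ R) ∪ B with hGdef
  have hA : IsPreconnected A := (convex_halfSpace_im_gt n).isPreconnected
  have hB : IsPreconnected B := (convex_halfSpace_im_lt (-n)).isPreconnected
  have hR : IsPreconnected R := (convex_halfSpace_re_gt n).isPreconnected
  have hp1A : (⟨n + 1, n + 1⟩ : ℂ) ∈ A := by simp only [hAdef, mem_setOf_eq]; linarith
  have hp1R : (⟨n + 1, n + 1⟩ : ℂ) ∈ R := by simp only [hRdef, mem_setOf_eq]; linarith
  have hAR : IsPreconnected (A ∪ R) := IsPreconnected.union _ hp1A hp1R hA hR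
  have hG : IsPreconnected G := by
    refine IsPreconnected.union (⟨n + 1, -(n + 1)⟩ : ℂ) (Or.inr ?_) ?_ hAR hB
    · simp only [hRdef, mem_setOf_eq]; linarith
    · simp only [hBdef, mem_setOf_eq]; linarith
  have hL : ∀ x : ℝ, IsPreconnected {z : ℂ | z.re = x} := by
    intro x
    have : {z : ℂ | z.re = x} = {z : ℂ | z.re ≤ x} ∩ {z : ℂ | x ≤ z.re} := by
      ext z; simp [le_antisymm_iff, and_comm]
    rw [this]
    exact ((convex_halfSpace_re_le x).inter (convex_halfSpace_re_ge x)).isPreconnected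
  have hLG : ∀ x : ℝ, IsPreconnected ({z : ℂ | z.re = x} ∪ G) := by
    intro x
    refine IsPreconnected.union (⟨x, n + 1⟩ : ℂ) rfl (Or.inl (Or.inl ?_)) (hL x) hG
    simp only [hAdef, mem_setOf_eq]; linarith
  have hn1K : (n + 1 : ℝ) ∉ K := by
    intro hc
    have := (hK hc).2
    linarith
  set c : Set (Set ℂ) := (fun x => {z : ℂ | z.re = x} ∪ G) '' Kᶜ with hcdef
  have hGsub : G ⊆ (K ×ℂ Icc (-n) n)ᶜ := by
    rintro z ((h | h) | h) hz <;> rw [Complex.mem_reProdIm] at hz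
    · exact absurd hz.2.2 (not_le.2 h)
    · exact absurd (hK hz.1).2 (not_le.2 h)
    · exact absurd hz.2.1 (not_le.2 h)
  have hS : (K ×ℂ Icc (-n) n)ᶜ = ⋃₀ c := by
    ext z
    constructor
    · intro hz
      have hz' : z.re ∉ K ∨ z.im ∉ Icc (-n) n := by
        by_contra h
        push_neg at h
        exact hz (Complex.mem_reProdIm.mpr ⟨h.1, h.2⟩)
      rcases hz' with h | h
      · exact ⟨_, ⟨z.re, h, rfl⟩, Or.inl rfl⟩
      · refine ⟨_, ⟨n + 1, hn1K, rfl⟩, Or.inr ?_⟩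
        rw [mem_Icc, not_and_or, not_le, not_le] at h
        rcases h with h | h
        · exact Or.inr h
        · exact Or.inl (Or.inl h)
    · rintro ⟨s, ⟨x, hx, rfl⟩, hzs⟩
      rcases hzs with h | hzG
      · intro hz
        rw [Complex.mem_reProdIm] at hz
        exact hx (h ▸ hz.1)
      · exact hGsub hzG
  constructor
  · rw [hS]
    exact ⟨⟨n + 1, n + 1⟩, _, ⟨n + 1, hn1K, rfl⟩, Or.inr (Or.inl (Or.inl hp1A))⟩
  · rw [hS]
    refine isPreconnected_sUnion (⟨n + 1, n + 1⟩ : ℂ) c ?_ ?_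
    · rintro s ⟨x, hx, rfl⟩
      exact Or.inr (Or.inl (Or.inl hp1A))
    · rintro s ⟨x, hx, rfl⟩
      exact hLG x

/-- For every σ-finite Borel measure `μ` on `ℂ` there is an increasing sequence `(Fₙ)` of
compact sets with empty interior and connected complement such that `μ(ℂ \ ⋃ₙ Fₙ) = 0`. -/

theorem stmt_5 (μ : Measure ℂ) [SigmaFinite μ] :
    ∃ F : ℕ → Set ℂ, (∀ n, F n ⊆ F (n + 1)) ∧
      (∀ n, IsCompact (F n) ∧ interior (F n) = ∅ ∧ IsConnected (F n)ᶜ) ∧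
      μ ((⋃ n, F n)ᶜ) = 0 := by
  classical
  set D : ℕ → Set ℂ := fun n => spanningSets μ n ∩ Metric.closedBall 0 n with hDdef
  have hDmono : Monotone D := fun m n h => inter_subset_inter (monotone_spanningSets μ h)
    (Metric.closedBall_subset_closedBall (by exact_mod_cast h))
  have hDball : ∀ n, ∀ z ∈ D n, |z.re| ≤ n ∧ |z.im| ≤ n := by
    intro n z hz
    have h1 : ‖z‖ ≤ n := by
      have := hz.2
      rwa [Metric.mem_closedBall, dist_zero_right] at this
    exact ⟨(Complex.abs_re_le_norm z).trans h1, (Complex.abs_im_le_norm z).trans h1⟩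
  have hDunion : ⋃ n, D n = univ := by
    ext z
    simp only [mem_iUnion, mem_univ, iff_true]
    have h1 : z ∈ ⋃ i, spanningSets μ i := by rw [iUnion_spanningSets]; trivial
    obtain ⟨m1, hm1⟩ := mem_iUnion.mp h1
    obtain ⟨m2, hm2⟩ := exists_nat_ge ‖z‖
    refine ⟨max m1 m2, monotone_spanningSets μ (le_max_left _ _) hm1, ?_⟩
    rw [Metric.mem_closedBall, dist_zero_right]
    exact hm2.trans (by exact_mod_cast le_max_right m1 m2)
  haveI hres : ∀ n, IsFiniteMeasure (μ.restrict (D n)) := fun n =>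
    ⟨by
      rw [Measure.restrict_apply_univ]
      exact (measure_mono inter_subset_left).trans_lt (measure_spanningSets_lt_top μ n)⟩
  set ν : ℕ → Measure ℝ := fun n => (μ.restrict (D n)).map Complex.re with hνdef
  have hνfin : ∀ n, IsFiniteMeasure (ν n) := fun n => Measure.isFiniteMeasure_map _ _
  have hex : ∀ n : ℕ, ∃ U : Set ℝ, IsOpen U ∧ Dense U ∧ ν n U ≤ 2⁻¹ ^ n := fun n =>
    @exists_dense_open_small (ν n) (hνfin n) _
      (pos_iff_ne_zero.mpr (pow_ne_zero _ (by simp)))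
  choose U hUopen hUdense hUsmall using hex
  set W : ℕ → Set ℝ := fun n => ⋂ m ∈ Iic n, U m with hWdef
  have hWopen : ∀ n, IsOpen (W n) := fun n =>
    (finite_Iic n).isOpen_biInter fun m _ => hUopen m
  have hWdense : ∀ n, Dense (W n) := fun n =>
    dense_biInter_of_isOpen (fun m _ => hUopen m) ((finite_Iic n).countable) fun m _ => hUdense m
  have hWanti : ∀ n, W (n + 1) ⊆ W n := fun n =>
    biInter_subset_biInter_left (Iic_subset_Iic.2 (Nat.le_succ n))
  have hWsub : ∀ n, W n ⊆ U n := fun n => biInter_subset_of_mem (mem_Iic.2 le_rfl)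
  set K : ℕ → Set ℝ := fun n => Icc (-(n : ℝ)) n \ W n with hKdef
  have hKcompact : ∀ n, IsCompact (K n) := fun n => isCompact_Icc.diff (hWopen n)
  have hKclosed : ∀ n, IsClosed (K n) := fun n => isClosed_Icc.sdiff (hWopen n)
  have hKsub : ∀ n, K n ⊆ Icc (-(n : ℝ)) n := fun n => diff_subset
  have hKint : ∀ n, interior (K n) = ∅ := by
    intro n
    by_contra h
    obtain ⟨x, hx⟩ := (hWdense n).inter_open_nonempty _ isOpen_interior
      (nonempty_iff_ne_empty.2 h)
    exact (interior_subset hx.1).2 hx.2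
  set F : ℕ → Set ℂ := fun n => K n ×ℂ Icc (-(n : ℝ)) n with hFdef
  have hFclosed : ∀ n, IsClosed (F n) := fun n => (hKclosed n).reProdIm isClosed_Icc
  refine ⟨F, ?_, fun n => ⟨?_, ?_, ?_⟩, ?_⟩
  · -- monotone
    intro n z hz
    rw [Complex.mem_reProdIm] at hz ⊢
    have hIcc : Icc (-(n : ℝ)) n ⊆ Icc (-((n : ℝ) + 1)) ((n : ℝ) + 1) :=
      Icc_subset_Icc (by linarith) (by linarith)
    constructor
    · refine diff_subset_diff ?_ (hWanti n) hz.1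
      push_cast
      exact Icc_subset_Icc (by linarith) (by linarith)
    · push_cast
      exact Icc_subset_Icc (by linarith) (by linarith) hz.2
  · -- compact
    exact Metric.isCompact_of_isClosed_isBounded (hFclosed n)
      ((hKcompact n).isBounded.reProdIm (Metric.isBounded_Icc _ _))
  · -- empty interior
    rw [Complex.interior_reProdIm, hKint n]
    exact eq_empty_of_forall_notMem fun z hz => (Complex.mem_reProdIm.mp hz).1
  · -- connected complement
    exact compl_reProdIm_connected (hKsub n)
  · -- measure zero
    have hzero : ∀ m, μ ((⋃ k, F k)ᶜ ∩ D m) = 0 := by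
      intro m
      have hle : ∀ n, m ≤ n → μ ((⋃ k, F k)ᶜ ∩ D m) ≤ 2⁻¹ ^ n := by
        intro n hmn
        have step1 : μ ((⋃ k, F k)ᶜ ∩ D m) ≤ μ.restrict (D n) (F n)ᶜ := by
          rw [Measure.restrict_apply (hFclosed n).measurableSet.compl]
          exact measure_mono (inter_subset_inter
            (compl_subset_compl.2 (subset_iUnion F n)) (hDmono hmn))
        have step2 : (F n)ᶜ ⊆
            Complex.re ⁻¹' (K n)ᶜ ∪ Complex.im ⁻¹' (Icc (-(n : ℝ)) n)ᶜ := by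
          intro z hz
          rw [mem_compl_iff, Complex.mem_reProdIm, not_and_or] at hz
          rcases hz with h | h
          exacts [Or.inl h, Or.inr h]
        have him : μ.restrict (D n) (Complex.im ⁻¹' (Icc (-(n : ℝ)) n)ᶜ) = 0 := by
          rw [Measure.restrict_apply (measurableSet_Icc.compl.preimage Complex.measurable_im)]
          refine measure_mono_null ?_ measure_empty
          rintro z ⟨hz1, hz2⟩
          exact hz1 (mem_Icc.2 (abs_le.mp (hDball n z hz2).2))
        have hre : μ.restrict (D n) (Complex.re ⁻¹' (K n)ᶜ) ≤ 2⁻¹ ^ n := by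
          have hmapeq : μ.restrict (D n) (Complex.re ⁻¹' (K n)ᶜ) = ν n ((K n)ᶜ) :=
            (Measure.map_apply Complex.measurable_re (hKclosed n).measurableSet.compl).symm
          rw [hmapeq]
          have hsub : (K n)ᶜ ⊆ (Icc (-(n : ℝ)) n)ᶜ ∪ U n := by
            intro x hx
            rw [mem_compl_iff, hKdef, mem_diff, not_and_or, not_not] at hx
            exact hx.imp id fun h => hWsub n h
          refine (measure_mono hsub).trans ?_
          refine (measure_union_le _ _).trans ?_
          have hIccc : ν n (Icc (-(n : ℝ)) n)ᶜ = 0 := by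
            rw [hνdef]
            rw [Measure.map_apply Complex.measurable_re measurableSet_Icc.compl]
            rw [Measure.restrict_apply (measurableSet_Icc.compl.preimage Complex.measurable_re)]
            refine measure_mono_null ?_ measure_empty
            rintro z ⟨hz1, hz2⟩
            exact hz1 (mem_Icc.2 (abs_le.mp (hDball n z hz2).1))
          rw [hIccc, zero_add]
          exact hUsmall n
        calc μ ((⋃ k, F k)ᶜ ∩ D m) ≤ μ.restrict (D n) (F n)ᶜ := step1
          _ ≤ μ.restrict (D n) (Complex.re ⁻¹' (K n)ᶜ ∪
              Complex.im ⁻¹' (Icc (-(n : ℝ)) n)ᶜ) := measure_mono step2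
          _ ≤ μ.restrict (D n) (Complex.re ⁻¹' (K n)ᶜ) +
              μ.restrict (D n) (Complex.im ⁻¹' (Icc (-(n : ℝ)) n)ᶜ) := measure_union_le _ _
          _ = μ.restrict (D n) (Complex.re ⁻¹' (K n)ᶜ) + 0 := by rw [him]
          _ = μ.restrict (D n) (Complex.re ⁻¹' (K n)ᶜ) := add_zero _
          _ ≤ 2⁻¹ ^ n := hre
      have htendsto : Tendsto (fun n : ℕ => (2⁻¹ : ℝ≥0∞) ^ n) atTop (𝓝 0) :=
        ENNReal.tendsto_pow_atTop_nhds_zero_of_lt_one (by norm_num)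
      have := ge_of_tendsto htendsto (eventually_atTop.2 ⟨m, hle⟩)
      exact le_antisymm this zero_le
    have hCeq : (⋃ k, F k)ᶜ = ⋃ m, ((⋃ k, F k)ᶜ ∩ D m) := by
      rw [← inter_iUnion, hDunion, inter_univ]
    rw [hCeq]
    exact measure_iUnion_null hzero
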